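/- Let F be a field, P a regular n×n upper triangular matrix polynomial over F, and fix i with 1 ≤ i < n. Suppose the adjacent diagonal entries factor as P_{ii} = a_F·a_G and P_{i+1,i+1} = b_F·b_G, where a_F·b_F is coprime to a_G·b_G. Set m = Ω(a_F) and n' = Ω(b_F). Then for all natural numbers α, β with α + β = m + n' and min(m,n') ≤ α, β ≤ max(m,n'), there exists a regular upper triangular n×n matrix polynomial P̃ over F, unimodularly equivalent to P, such that P̃_{kk} = P_{kk} for every k ∉ {i, i+1}, and P̃_{ii} = ã·a_G and P̃_{i+1,i+1} = b̃·b_G for some polynomials ã, b̃ with ã·b̃ a nonzero scalar multiple of a_F·b_F, Ω(ã) = α, and Ω(b̃) = β. -/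

import Mathlib

open Polynomial

/-- Unimodular equivalence of square matrix polynomials. -/
def UnimodEquiv {F : Type*} [Field F] {n : ℕ}
    (P Q : Matrix (Fin n) (Fin n) F[X]) : Prop :=
  ∃ U V : Matrix (Fin n) (Fin n) F[X], IsUnit U.det ∧ IsUnit V.det ∧ Q = U * P * V

/-- `Ω(p)`: the number of irreducible factors of `p` counted with multiplicity. -/
noncomputable def OmegaCount {F : Type*} [Field F] (p : F[X]) : ℕ :=
  letI := Classical.decEq F
  (UniqueFactorizationMonoid.normalizedFactors p).card

namespace UnimodEquiv
variable {F : Type*} [Field F] {n : ℕ} {A B C : Matrix (Fin n) (Fin n) F[X]}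

theorem refl (A : Matrix (Fin n) (Fin n) F[X]) : UnimodEquiv A A :=
  ⟨1, 1, by simp, by simp, by simp⟩

theorem symm (h : UnimodEquiv A B) : UnimodEquiv B A := by
  obtain ⟨U, V, hU, hV, rfl⟩ := h
  refine ⟨U⁻¹, V⁻¹, ?_, ?_, ?_⟩
  · rw [Matrix.det_nonsing_inv]; exact hU.ringInverse
  · rw [Matrix.det_nonsing_inv]; exact hV.ringInverse
  · rw [Matrix.mul_assoc, Matrix.mul_assoc, Matrix.mul_nonsing_inv _ hV, Matrix.mul_one,
      ← Matrix.mul_assoc, Matrix.nonsing_inv_mul _ hU, Matrix.one_mul]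

theorem trans (h1 : UnimodEquiv A B) (h2 : UnimodEquiv B C) : UnimodEquiv A C := by
  obtain ⟨U1, V1, hU1, hV1, rfl⟩ := h1
  obtain ⟨U2, V2, hU2, hV2, rfl⟩ := h2
  exact ⟨U2 * U1, V1 * V2, by rw [Matrix.det_mul]; exact hU2.mul hU1,
    by rw [Matrix.det_mul]; exact hV1.mul hV2, by noncomm_ring⟩

theorem det_associated (h : UnimodEquiv A B) : Associated A.det B.det := by
  obtain ⟨U, V, hU, hV, rfl⟩ := h
  rw [Matrix.det_mul, Matrix.det_mul]
  obtain ⟨u, hu⟩ := hU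
  obtain ⟨v, hv⟩ := hV
  exact ⟨u * v, by rw [Units.val_mul, ← hu, ← hv]; ring⟩

theorem dvd_entries (h : UnimodEquiv A B) {q : F[X]} (hq : ∀ i j, q ∣ A i j) :
    ∀ i j, q ∣ B i j := by
  obtain ⟨U, V, hU, hV, rfl⟩ := h
  intro i j
  rw [Matrix.mul_apply]
  refine Finset.dvd_sum fun l _ => ?_
  rw [Matrix.mul_apply, Finset.sum_mul]
  exact Finset.dvd_sum fun k _ => (hq k l).mul_left _ |>.mul_right _

end UnimodEquiv


section Two
variable {F : Type*} [Field F]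
open UniqueFactorizationMonoid

theorem omega_le_of_dvd {p q : F[X]} (hq : q ≠ 0) (h : p ∣ q) :
    OmegaCount p ≤ OmegaCount q := by
  letI := Classical.decEq F
  have hp : p ≠ 0 := fun h0 => hq (by simpa [h0] using h)
  exact Multiset.card_le_card
    ((dvd_iff_normalizedFactors_le_normalizedFactors hp hq).mp h)

theorem omega_lt_of_dvd_not_dvd {p q : F[X]} (hq : q ≠ 0) (hpq : p ∣ q) (h : ¬ q ∣ p) :
    OmegaCount p < OmegaCount q := by
  letI := Classical.decEq F
  have hp : p ≠ 0 := fun h0 => h (by simp [h0])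
  have hle := (dvd_iff_normalizedFactors_le_normalizedFactors hp hq).mp hpq
  rcases lt_or_eq_of_le (Multiset.card_le_card hle) with hlt | heq
  · exact hlt
  · exfalso
    have : UniqueFactorizationMonoid.normalizedFactors p =
        UniqueFactorizationMonoid.normalizedFactors q :=
      Multiset.eq_of_le_of_card_le hle (le_of_eq heq.symm)
    exact h ((dvd_iff_normalizedFactors_le_normalizedFactors hq hp).mpr (le_of_eq this.symm))

theorem isUnit_of_omega_eq_zero {p : F[X]} (hp : p ≠ 0) (h : OmegaCount p = 0) : IsUnit p := by
  letI := Classical.decEq F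
  have h0 : UniqueFactorizationMonoid.normalizedFactors p = 0 := Multiset.card_eq_zero.mp h
  have := UniqueFactorizationMonoid.prod_normalizedFactors hp
  rw [h0, Multiset.prod_zero] at this
  exact this.isUnit isUnit_one

theorem rowReduceRight (a x y b : F[X]) (ha : a ≠ 0) :
    ∃ g y' b', g ≠ 0 ∧ g ∣ a ∧ g ∣ x ∧ (∃ u v : F[X], g = a * u + x * v) ∧
      UnimodEquiv !![a, x; y, b] !![g, 0; y', b'] := by
  letI := Classical.decEq F
  set g := EuclideanDomain.gcd a x with hg
  have hgdvda : g ∣ a := EuclideanDomain.gcd_dvd_left a x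
  have hgdvdx : g ∣ x := EuclideanDomain.gcd_dvd_right a x
  have hg0 : g ≠ 0 := fun h => ha (by simpa [h] using hgdvda)
  obtain ⟨a₁, ha₁⟩ := id hgdvda
  obtain ⟨x₁, hx₁⟩ := id hgdvdx
  set u := EuclideanDomain.gcdA a x
  set v := EuclideanDomain.gcdB a x
  have hbez : g = a * u + x * v := EuclideanDomain.gcd_eq_gcd_ab a x
  have key : g * (u * a₁ + x₁ * v) = g := by
    calc g * (u * a₁ + x₁ * v) = (g * a₁) * u + (g * x₁) * v := by ring
    _ = a * u + x * v := by rw [← ha₁, ← hx₁]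
    _ = g := hbez.symm
  have hdet : u * a₁ + x₁ * v = 1 := mul_left_cancel₀ hg0 (key.trans (mul_one g).symm)
  refine ⟨g, y * u + b * v, y * (-x₁) + b * a₁, hg0, hgdvda, hgdvdx, ⟨u, v, hbez⟩,
    1, !![u, -x₁; v, a₁], by simp, ?_, ?_⟩
  · rw [Matrix.det_fin_two_of, show u * a₁ - -x₁ * v = u * a₁ + x₁ * v by ring, hdet]
    exact isUnit_one
  · rw [Matrix.one_mul, Matrix.mul_fin_two]
    have e1 : a * u + x * v = g := hbez.symm
    have e2 : a * -x₁ + x * a₁ = 0 := by rw [ha₁, hx₁]; ring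
    rw [e1, e2]

theorem colReduceLeft (a x y b : F[X]) (ha : a ≠ 0) :
    ∃ g x' b', g ≠ 0 ∧ g ∣ a ∧ g ∣ y ∧ (∃ u v : F[X], g = a * u + y * v) ∧
      UnimodEquiv !![a, x; y, b] !![g, x'; 0, b'] := by
  letI := Classical.decEq F
  set g := EuclideanDomain.gcd a y with hg
  have hgdvda : g ∣ a := EuclideanDomain.gcd_dvd_left a y
  have hgdvdy : g ∣ y := EuclideanDomain.gcd_dvd_right a y
  have hg0 : g ≠ 0 := fun h => ha (by simpa [h] using hgdvda)
  obtain ⟨a₁, ha₁⟩ := id hgdvda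
  obtain ⟨y₁, hy₁⟩ := id hgdvdy
  set u := EuclideanDomain.gcdA a y
  set v := EuclideanDomain.gcdB a y
  have hbez : g = a * u + y * v := EuclideanDomain.gcd_eq_gcd_ab a y
  have key : g * (u * a₁ + y₁ * v) = g := by
    calc g * (u * a₁ + y₁ * v) = (g * a₁) * u + (g * y₁) * v := by ring
    _ = a * u + y * v := by rw [← ha₁, ← hy₁]
    _ = g := hbez.symm
  have hdet : u * a₁ + y₁ * v = 1 := mul_left_cancel₀ hg0 (key.trans (mul_one g).symm)
  refine ⟨g, u * x + v * b, -y₁ * x + a₁ * b, hg0, hgdvda, hgdvdy, ⟨u, v, hbez⟩,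
    !![u, v; -y₁, a₁], 1, ?_, by simp, ?_⟩
  · rw [Matrix.det_fin_two_of, show u * a₁ - v * -y₁ = u * a₁ + y₁ * v by ring, hdet]
    exact isUnit_one
  · rw [Matrix.mul_one, Matrix.mul_fin_two]
    have e1 : u * a + v * y = g := by rw [hbez]; ring
    have e2 : -y₁ * a + a₁ * y = 0 := by rw [ha₁, hy₁]; ring
    rw [e1, e2]

theorem clearLow (g y' b' : F[X]) (h : g ∣ y') :
    UnimodEquiv !![g, 0; y', b'] !![g, 0; 0, b'] := by
  obtain ⟨y₁, hy₁⟩ := h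
  refine ⟨!![1, 0; -y₁, 1], 1, ?_, by simp, ?_⟩
  · rw [Matrix.det_fin_two_of]; norm_num
  · rw [Matrix.mul_one, Matrix.mul_fin_two]
    have e : -y₁ * g + 1 * y' = 0 := by rw [hy₁]; ring
    ext i j
    fin_cases i <;> fin_cases j <;> simp [hy₁] <;> ring

theorem toDiag : ∀ (n : ℕ) (a x y b : F[X]), a ≠ 0 → OmegaCount a ≤ n →
    ∃ d e, d ≠ 0 ∧ UnimodEquiv !![a, x; y, b] !![d, 0; 0, e] := by
  intro n
  induction n with
  | zero =>
    intro a x y b ha hn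
    obtain ⟨g, y', b', hg0, hga, hgx, hbez, h1⟩ := rowReduceRight a x y b ha
    have hgu : IsUnit g := isUnit_of_omega_eq_zero hg0
      (Nat.le_zero.mp ((omega_le_of_dvd ha hga).trans hn))
    exact ⟨g, b', hg0, h1.trans (clearLow g y' b' (hgu.dvd))⟩
  | succ n ih =>
    intro a x y b ha hn
    obtain ⟨g, y', b', hg0, hga, hgx, hbez, h1⟩ := rowReduceRight a x y b ha
    by_cases hgy : g ∣ y'
    · exact ⟨g, b', hg0, h1.trans (clearLow g y' b' hgy)⟩
    · obtain ⟨e₀, x'', b'', he0, heg, hey, hbez2, h2⟩ := colReduceLeft g 0 y' b' hg0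
      have hne : ¬ g ∣ e₀ := fun h => hgy (h.trans hey)
      have hlt : OmegaCount e₀ < OmegaCount g := omega_lt_of_dvd_not_dvd hg0 heg hne
      have hle : OmegaCount e₀ ≤ n := by
        have := omega_le_of_dvd ha hga
        omega
      obtain ⟨d, e, hd0, h3⟩ := ih e₀ x'' 0 b'' he0 hle
      exact ⟨d, e, hd0, (h1.trans h2).trans h3⟩

theorem diagToSmith (a b : F[X]) (ha : a ≠ 0) :
    ∃ d a₁, a = d * a₁ ∧ d ∣ b ∧ (∀ e : F[X], e ∣ a → e ∣ b → e ∣ d) ∧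
      UnimodEquiv !![a, 0; 0, b] !![d, 0; 0, b * a₁] := by
  letI := Classical.decEq F
  set d := EuclideanDomain.gcd a b with hd
  have hda : d ∣ a := EuclideanDomain.gcd_dvd_left a b
  have hdb : d ∣ b := EuclideanDomain.gcd_dvd_right a b
  have hd0 : d ≠ 0 := fun h => ha (by simpa [h] using hda)
  obtain ⟨a₁, ha₁⟩ := id hda
  obtain ⟨b₁, hb₁⟩ := id hdb
  set u := EuclideanDomain.gcdA a b
  set v := EuclideanDomain.gcdB a b
  have hbez : d = a * u + b * v := EuclideanDomain.gcd_eq_gcd_ab a b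
  have key : d * (u * a₁ + b₁ * v) = d := by
    calc d * (u * a₁ + b₁ * v) = (d * a₁) * u + (d * b₁) * v := by ring
    _ = a * u + b * v := by rw [← ha₁, ← hb₁]
    _ = d := hbez.symm
  have hdet : u * a₁ + b₁ * v = 1 := mul_left_cancel₀ hd0 (key.trans (mul_one d).symm)
  have hdvd : ∀ e : F[X], e ∣ a → e ∣ b → e ∣ d := fun e hea heb => by
    rw [hbez]; exact dvd_add (hea.mul_right u) (heb.mul_right v)
  -- step 1 : add row 2 to row 1
  have s1 : UnimodEquiv !![a, 0; 0, b] !![a, b; 0, b] := by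
    refine ⟨!![1, 1; 0, 1], 1, ?_, by simp, ?_⟩
    · rw [Matrix.det_fin_two_of]; norm_num
    · rw [Matrix.mul_one, Matrix.mul_fin_two]
      ext i j
      fin_cases i <;> fin_cases j <;> simp
  -- step 2 : Bezout column operation
  have s2 : UnimodEquiv !![a, b; 0, b] !![d, 0; b * v, b * a₁] := by
    refine ⟨1, !![u, -b₁; v, a₁], by simp, ?_, ?_⟩
    · rw [Matrix.det_fin_two_of, show u * a₁ - -b₁ * v = u * a₁ + b₁ * v by ring, hdet]
      exact isUnit_one
    · rw [Matrix.one_mul, Matrix.mul_fin_two]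
      have e1 : a * u + b * v = d := hbez.symm
      have e2 : a * -b₁ + b * a₁ = 0 := by rw [ha₁, hb₁]; ring
      rw [e1, e2, show (0:F[X]) * u + b * v = b * v by ring,
        show (0:F[X]) * -b₁ + b * a₁ = b * a₁ by ring]
  -- step 3 : clear the lower-left entry
  have s3 : UnimodEquiv !![d, 0; b * v, b * a₁] !![d, 0; 0, b * a₁] :=
    clearLow _ _ _ (by rw [hb₁]; exact ⟨b₁ * v, by ring⟩)
  exact ⟨d, a₁, ha₁, hdb, hdvd, (s1.trans s2).trans s3⟩

theorem diagScale (D E u v : F[X]) (hu : IsUnit u) (hv : IsUnit v) :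
    UnimodEquiv !![D, 0; 0, E] !![D * u, 0; 0, E * v] := by
  refine ⟨1, !![u, 0; 0, v], by simp, ?_, ?_⟩
  · rw [Matrix.det_fin_two_of, show u * v - 0 * 0 = u * v by ring]
    exact hu.mul hv
  · rw [Matrix.one_mul, Matrix.mul_fin_two]
    rw [show D * u + 0 * 0 = D * u by ring, show D * 0 + 0 * v = 0 by ring,
      show (0:F[X]) * u + E * 0 = 0 by ring, show (0:F[X]) * 0 + E * v = E * v by ring]

theorem dvd_tri_entries {a x b q : F[X]} (h1 : q ∣ a) (h2 : q ∣ x) (h3 : q ∣ b) :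
    ∀ i j, q ∣ !![a, x; 0, b] i j := by
  intro i j; fin_cases i <;> fin_cases j <;> simpa

theorem dvd_diag_entries {D E q : F[X]} (h1 : q ∣ D) (h2 : q ∣ E) :
    ∀ i j, q ∣ !![D, 0; 0, E] i j := by
  intro i j; fin_cases i <;> fin_cases j <;> simpa

theorem tri_char (a x b : F[X]) (ha : a ≠ 0) (hab : a * b ≠ 0) :
    ∃ D E : F[X], D ≠ 0 ∧ E ≠ 0 ∧ UnimodEquiv !![a, x; 0, b] !![D, 0; 0, E] ∧
      (∀ q : F[X], (q ∣ a ∧ q ∣ x ∧ q ∣ b) ↔ q ∣ D) := by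
  obtain ⟨d, e, hd0, h1⟩ := toDiag (OmegaCount a) a x 0 b ha le_rfl
  obtain ⟨D, d₁, hdD, hDe, hDmax, h2⟩ := diagToSmith d e hd0
  set E := e * d₁ with hE
  have hMD : UnimodEquiv !![a, x; 0, b] !![D, 0; 0, E] := h1.trans h2
  have hD0 : D ≠ 0 := fun h => hd0 (by rw [hdD, h, zero_mul])
  have hDE : D ∣ E := hDe.mul_right d₁
  have hdetM : (!![a, x; 0, b] : Matrix (Fin 2) (Fin 2) F[X]).det = a * b := by
    rw [Matrix.det_fin_two_of]; ring
  have hdetD : (!![D, 0; 0, E] : Matrix (Fin 2) (Fin 2) F[X]).det = D * E := by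
    rw [Matrix.det_fin_two_of]; ring
  have hadet : Associated (a * b) (D * E) := by
    have := hMD.det_associated; rwa [hdetM, hdetD] at this
  have hE0 : E ≠ 0 := by
    intro h
    apply hab
    have : D * E = 0 := by rw [h, mul_zero]
    exact hadet.symm.eq_zero_iff.mp this
  refine ⟨D, E, hD0, hE0, hMD, fun q => ⟨fun ⟨h1', h2', h3'⟩ => ?_, fun hqD => ?_⟩⟩
  · have := hMD.dvd_entries (dvd_tri_entries h1' h2' h3') 0 0
    simpa using this
  · refine ⟨?_, ?_, ?_⟩
    · have := hMD.symm.dvd_entries (dvd_diag_entries hqD (hqD.trans hDE)) 0 0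
      simpa using this
    · have := hMD.symm.dvd_entries (dvd_diag_entries hqD (hqD.trans hDE)) 0 1
      simpa using this
    · have := hMD.symm.dvd_entries (dvd_diag_entries hqD (hqD.trans hDE)) 1 1
      simpa using this

theorem triangular_equiv (a x b a' x' b' : F[X]) (hab : a * b ≠ 0) (hab' : a' * b' ≠ 0)
    (hdet : Associated (a * b) (a' * b'))
    (hgcd : ∀ q : F[X], (q ∣ a ∧ q ∣ x ∧ q ∣ b) ↔ (q ∣ a' ∧ q ∣ x' ∧ q ∣ b')) :
    UnimodEquiv !![a, x; 0, b] !![a', x'; 0, b'] := by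
  have ha : a ≠ 0 := fun h => hab (by rw [h, zero_mul])
  have ha' : a' ≠ 0 := fun h => hab' (by rw [h, zero_mul])
  obtain ⟨D, E, hD0, hE0, hMD, hchar⟩ := tri_char a x b ha hab
  obtain ⟨D', E', hD0', hE0', hMD', hchar'⟩ := tri_char a' x' b' ha' hab'
  have hDD' : Associated D D' := by
    have h1 : D ∣ D' := (hchar' D).mp ((hgcd D).mp ((hchar D).mpr dvd_rfl))
    have h2 : D' ∣ D := (hchar D').mp ((hgcd D').mpr ((hchar' D').mpr dvd_rfl))
    exact associated_of_dvd_dvd h1 h2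
  have hdet1 : Associated (a * b) (D * E) := by
    have := hMD.det_associated
    rwa [Matrix.det_fin_two_of, Matrix.det_fin_two_of,
      show a * b - x * 0 = a * b by ring, show D * E - 0 * 0 = D * E by ring] at this
  have hdet2 : Associated (a' * b') (D' * E') := by
    have := hMD'.det_associated
    rwa [Matrix.det_fin_two_of, Matrix.det_fin_two_of,
      show a' * b' - x' * 0 = a' * b' by ring, show D' * E' - 0 * 0 = D' * E' by ring] at this
  have hDEDE : Associated (D * E) (D' * E') := (hdet1.symm.trans hdet).trans hdet2
  have hEE' : Associated E E' := Associated.of_mul_left hDEDE hDD' hD0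
  obtain ⟨u, hu⟩ := hDD'
  obtain ⟨v, hv⟩ := hEE'
  have hscale : UnimodEquiv !![D, 0; 0, E] !![D', 0; 0, E'] := by
    have := diagScale D E u v u.isUnit v.isUnit
    rwa [hu, hv] at this
  exact (hMD.trans hscale).trans hMD'.symm

open UniqueFactorizationMonoid in
theorem factor_split (aF bF dF : F[X]) (haF : aF ≠ 0) (hbF : bF ≠ 0)
    (hdFa : dF ∣ aF) (hdFb : dF ∣ bF) (α β : ℕ)
    (hsum : α + β = OmegaCount aF + OmegaCount bF)
    (hα : OmegaCount dF ≤ α) (hβ : OmegaCount dF ≤ β) :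
    ∃ a' b' : F[X], a' ≠ 0 ∧ b' ≠ 0 ∧ dF ∣ a' ∧ dF ∣ b' ∧
      OmegaCount a' = α ∧ OmegaCount b' = β ∧
      a' * b' = C (1 : F) * (aF * bF) := by
  letI := Classical.decEq F
  have hdF0 : dF ≠ 0 := fun h => haF (by simpa [h] using hdFa)
  have hab0 : aF * bF ≠ 0 := mul_ne_zero haF hbF
  set S := normalizedFactors (aF * bF) with hS
  set T := normalizedFactors dF with hT
  have hTTS : T + T ≤ S := by
    have hdd : dF * dF ∣ aF * bF := mul_dvd_mul hdFa hdFb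
    have := (dvd_iff_normalizedFactors_le_normalizedFactors
      (mul_ne_zero hdF0 hdF0) hab0).mp hdd
    rwa [normalizedFactors_mul hdF0 hdF0] at this
  have hcardS : Multiset.card S = α + β := by
    rw [hS, normalizedFactors_mul haF hbF, Multiset.card_add, hsum]; rfl
  set k := Multiset.card T with hk
  have hkd : k = OmegaCount dF := rfl
  -- choose α - k extra factors
  set L := S - (T + T) with hL
  have hcardL : Multiset.card L = (α + β) - 2 * k := by
    rw [hL, Multiset.card_sub hTTS, hcardS, Multiset.card_add, ← hk]; ring_nf
  have hαk : α - k ≤ Multiset.card L := by omega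
  obtain ⟨R, hRL, hRcard⟩ : ∃ R : Multiset F[X], R ≤ L ∧ Multiset.card R = α - k := by
    refine ⟨↑(L.toList.take (α - k)), ?_, ?_⟩
    · have h1 : (L.toList.take (α - k)).Subperm L.toList := (List.take_sublist _ _).subperm
      have := Multiset.coe_le.mpr h1
      rwa [Multiset.coe_toList] at this
    · rw [Multiset.coe_card, List.length_take, Multiset.length_toList]
      omega
  set A := T + R with hA
  have hAS : A ≤ S := by
    calc A = T + R := rfl
    _ ≤ T + L := add_le_add_right hRL T
    _ ≤ (T + T) + L := add_le_add_left (Multiset.le_add_right T T) L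
    _ = S := by rw [hL, add_tsub_cancel_of_le hTTS]
  set B := S - A with hB
  have hAB : A + B = S := add_tsub_cancel_of_le hAS
  have hcardA : Multiset.card A = α := by
    rw [hA, Multiset.card_add, hRcard, ← hk]; omega
  have hcardB : Multiset.card B = β := by
    have := congrArg Multiset.card hAB
    rw [Multiset.card_add, hcardA, hcardS] at this
    omega
  have hTB : T ≤ B := by
    have h1 : T + A ≤ S := by
      calc T + A = (T + T) + R := (add_assoc T T R).symm
      _ ≤ (T + T) + L := add_le_add_right hRL _
      _ = S := by rw [hL, add_tsub_cancel_of_le hTTS]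
    rw [hB]
    exact le_tsub_of_add_le_right h1
  -- elements of S are prime, normalized, nonzero
  have hSirr : ∀ p ∈ S, Irreducible p := fun p hp => irreducible_of_normalized_factor p hp
  have hSnorm : ∀ p ∈ S, normalize p = p := fun p hp => normalize_normalized_factor p hp
  have hS0 : (0 : F[X]) ∉ S := fun h0 => (hSirr 0 h0).ne_zero rfl
  have hApr0 : A.prod ≠ 0 := Multiset.prod_ne_zero (fun h => hS0 (Multiset.mem_of_le hAS h))
  have hBpr0 : B.prod ≠ 0 := Multiset.prod_ne_zero
    (fun h => hS0 (Multiset.mem_of_le (tsub_le_self (a := S) (b := A)) h))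
  have homega : ∀ M : Multiset F[X], M ≤ S → OmegaCount M.prod = Multiset.card M := by
    intro M hMS
    have : normalizedFactors M.prod = M.map normalize :=
      normalizedFactors_prod_eq M (fun p hp => hSirr p (Multiset.mem_of_le hMS hp))
    have hmap : M.map normalize = M :=
      Multiset.map_congr rfl (fun p hp => hSnorm p (Multiset.mem_of_le hMS hp)) |>.trans
        (Multiset.map_id M)
    show (normalizedFactors M.prod).card = _
    rw [this, hmap]
  have hTprod : dF ∣ T.prod := (prod_normalizedFactors hdF0).symm.dvd
  have hdFA : dF ∣ A.prod :=
    hTprod.trans (Multiset.prod_dvd_prod_of_le (Multiset.le_add_right T R))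
  have hdFB : dF ∣ B.prod := hTprod.trans (Multiset.prod_dvd_prod_of_le hTB)
  obtain ⟨w, hw⟩ := prod_normalizedFactors hab0
  refine ⟨A.prod, B.prod * ↑w, hApr0, mul_ne_zero hBpr0 w.ne_zero, hdFA,
    hdFB.trans (Dvd.intro _ rfl), (homega A hAS).trans hcardA, ?_, ?_⟩
  · have h1 : B.prod ∣ B.prod * ↑w := Dvd.intro _ rfl
    have h2 : B.prod * ↑w ∣ B.prod := ⟨↑w⁻¹, by
      rw [mul_assoc, ← Units.val_mul, mul_inv_cancel, Units.val_one, mul_one]⟩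
    have hBS : B ≤ S := tsub_le_self
    have := homega B hBS
    exact le_antisymm (omega_le_of_dvd hBpr0 h2) (omega_le_of_dvd (mul_ne_zero hBpr0 w.ne_zero) h1)
      |>.trans (this.trans hcardB)
  · rw [map_one, one_mul, show A.prod * (B.prod * ↑w) = (A.prod * B.prod) * ↑w by ring,
      ← Multiset.prod_add, hAB, hw]

theorem two_main (aF aG bF bG x : F[X]) (haF : aF ≠ 0) (haG : aG ≠ 0)
    (hbF : bF ≠ 0) (hbG : bG ≠ 0)
    (hcop : IsCoprime (aF * bF) (aG * bG)) (α β : ℕ)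
    (hsum : α + β = OmegaCount aF + OmegaCount bF)
    (hα : min (OmegaCount aF) (OmegaCount bF) ≤ α)
    (hβ : min (OmegaCount aF) (OmegaCount bF) ≤ β) :
    ∃ a' b' y : F[X], a' ≠ 0 ∧ b' ≠ 0 ∧ OmegaCount a' = α ∧ OmegaCount b' = β ∧
      a' * b' = C (1:F) * (aF * bF) ∧
      UnimodEquiv !![aF * aG, x; 0, bF * bG] !![a' * aG, y; 0, b' * bG] := by
  letI := Classical.decEq F
  set A := aF * aG with hAdef
  set B := bF * bG with hBdef
  have hA : A ≠ 0 := mul_ne_zero haF haG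
  have hB : B ≠ 0 := mul_ne_zero hbF hbG
  set d := EuclideanDomain.gcd A (EuclideanDomain.gcd x B) with hddef
  have hd1 : d ∣ A := EuclideanDomain.gcd_dvd_left _ _
  have hd2 : d ∣ x := (EuclideanDomain.gcd_dvd_right _ _).trans (EuclideanDomain.gcd_dvd_left _ _)
  have hd3 : d ∣ B := (EuclideanDomain.gcd_dvd_right _ _).trans (EuclideanDomain.gcd_dvd_right _ _)
  have hdmax : ∀ q : F[X], q ∣ A → q ∣ x → q ∣ B → q ∣ d := fun q h1 h2 h3 =>
    EuclideanDomain.dvd_gcd h1 (EuclideanDomain.dvd_gcd h2 h3)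
  obtain ⟨dF, dG, hdFa, hdGa, hdprod⟩ := exists_dvd_and_dvd_of_dvd_mul hd1
  obtain ⟨eF, eG, heFb, heGb, heprod⟩ := exists_dvd_and_dvd_of_dvd_mul hd3
  have hcop1 : IsCoprime dF (aG * bG) :=
    IsCoprime.of_isCoprime_of_dvd_left hcop (hdFa.trans (dvd_mul_right aF bF))
  have hcop2 : IsCoprime dG (aF * bF) :=
    IsCoprime.of_isCoprime_of_dvd_left hcop.symm (hdGa.trans (dvd_mul_right aG bG))
  have hdFeF : dF ∣ eF := by
    have hcopFeG : IsCoprime dF eG :=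
      IsCoprime.of_isCoprime_of_dvd_right hcop1 (heGb.trans (dvd_mul_left bG aG))
    exact hcopFeG.dvd_of_dvd_mul_right (by rw [← heprod, hdprod]; exact dvd_mul_right dF dG)
  have hdGeG : dG ∣ eG := by
    have hcopGeF : IsCoprime dG eF :=
      IsCoprime.of_isCoprime_of_dvd_right hcop2 (heFb.trans (dvd_mul_left bF aF))
    exact hcopGeF.dvd_of_dvd_mul_left (by rw [← heprod, hdprod]; exact dvd_mul_left dG dF)
  have hdFbF : dF ∣ bF := hdFeF.trans heFb
  have hdGbG : dG ∣ bG := hdGeG.trans heGb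
  have hcopFG : IsCoprime dF dG :=
    IsCoprime.of_isCoprime_of_dvd_right hcop1 (hdGa.trans (dvd_mul_right aG bG))
  have hΩdF : OmegaCount dF ≤ min (OmegaCount aF) (OmegaCount bF) :=
    le_min (omega_le_of_dvd haF hdFa) (omega_le_of_dvd hbF hdFbF)
  obtain ⟨a', b', ha'0, hb'0, hdFa', hdFb', hΩa', hΩb', hab'⟩ :=
    factor_split aF bF dF haF hbF hdFa hdFbF α β hsum (hΩdF.trans hα) (hΩdF.trans hβ)
  have hd_dvd_a' : d ∣ a' * aG := by
    rw [hdprod]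
    exact hcopFG.mul_dvd (hdFa'.trans (dvd_mul_right a' aG)) (hdGa.trans (dvd_mul_left aG a'))
  have hd_dvd_b' : d ∣ b' * bG := by
    rw [hdprod]
    exact hcopFG.mul_dvd (hdFb'.trans (dvd_mul_right b' bG)) (hdGbG.trans (dvd_mul_left bG b'))
  have hab'' : a' * b' = aF * bF := by rw [hab', map_one, one_mul]
  refine ⟨a', b', d, ha'0, hb'0, hΩa', hΩb', hab', ?_⟩
  apply triangular_equiv
  · exact mul_ne_zero hA hB
  · exact mul_ne_zero (mul_ne_zero ha'0 haG) (mul_ne_zero hb'0 hbG)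
  · refine ⟨1, ?_⟩
    rw [Units.val_one, mul_one, hAdef, hBdef,
      show a' * aG * (b' * bG) = (a' * b') * (aG * bG) by ring, hab'',
      show aF * aG * (bF * bG) = aF * bF * (aG * bG) by ring]
  · intro q
    constructor
    · rintro ⟨h1, h2, h3⟩
      have hqd : q ∣ d := hdmax q h1 h2 h3
      exact ⟨hqd.trans hd_dvd_a', hqd, hqd.trans hd_dvd_b'⟩
    · rintro ⟨h1, h2, h3⟩
      exact ⟨h2.trans hd1, h2.trans hd2, h2.trans hd3⟩

noncomputable def EmbM {N : ℕ} (i j : Fin N) (A : Matrix (Fin 2) (Fin 2) F[X]) :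
    Matrix (Fin N) (Fin N) F[X] :=
  Matrix.of fun r c =>
    if r = i then (if c = i then A 0 0 else if c = j then A 0 1 else 0)
    else if r = j then (if c = i then A 1 0 else if c = j then A 1 1 else 0)
    else (if r = c then 1 else 0)

theorem mul_embM {N : ℕ} {i j : Fin N} (hne : i ≠ j) (A : Matrix (Fin 2) (Fin 2) F[X])
    (M : Matrix (Fin N) (Fin N) F[X]) (r c : Fin N) :
    (M * EmbM i j A) r c =
      if c = i then M r i * A 0 0 + M r j * A 1 0
      else if c = j then M r i * A 0 1 + M r j * A 1 1
      else M r c := by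
  rw [Matrix.mul_apply]
  by_cases hci : c = i
  · rw [if_pos hci]
    have key : ∀ k, M r k * EmbM i j A k c =
        (if k = i then M r i * A 0 0 else 0) + (if k = j then M r j * A 1 0 else 0) := by
      intro k
      by_cases h1 : k = i
      · simp [EmbM, h1, hci, hne, Ne.symm hne]
      · by_cases h2 : k = j
        · simp [EmbM, h1, h2, hci, hne, Ne.symm hne]
        · simp [EmbM, h1, h2, hci, fun h : k = c => h1 (h.trans hci)]
    rw [Finset.sum_congr rfl (fun k _ => key k), Finset.sum_add_distrib]
    simp
  · rw [if_neg hci]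
    by_cases hcj : c = j
    · rw [if_pos hcj]
      have key : ∀ k, M r k * EmbM i j A k c =
          (if k = i then M r i * A 0 1 else 0) + (if k = j then M r j * A 1 1 else 0) := by
        intro k
        by_cases h1 : k = i
        · simp [EmbM, h1, hcj, hci, hne, Ne.symm hne]
        · by_cases h2 : k = j
          · simp [EmbM, h1, h2, hcj, hci, hne, Ne.symm hne]
          · simp [EmbM, h1, h2, hcj, hci, fun h : k = c => h2 (h.trans hcj)]
      rw [Finset.sum_congr rfl (fun k _ => key k), Finset.sum_add_distrib]
      simp
    · rw [if_neg hcj]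
      have hic : ¬ (i = c) := fun h => hci h.symm
      have hjc : ¬ (j = c) := fun h => hcj h.symm
      have key : ∀ k, M r k * EmbM i j A k c = (if k = c then M r c else 0) := by
        intro k
        by_cases h1 : k = i
        · simp [EmbM, h1, hci, hcj, hic, hjc]
        · by_cases h2 : k = j
          · simp [EmbM, h1, h2, hci, hcj, hic, hjc]
          · by_cases h3 : k = c
            · simp [EmbM, h1, h2, h3, hci, hcj]
            · simp [EmbM, h1, h2, h3]
      rw [Finset.sum_congr rfl (fun k _ => key k)]
      simp

theorem embM_mul {N : ℕ} {i j : Fin N} (hne : i ≠ j) (A : Matrix (Fin 2) (Fin 2) F[X])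
    (M : Matrix (Fin N) (Fin N) F[X]) (r c : Fin N) :
    (EmbM i j A * M) r c =
      if r = i then A 0 0 * M i c + A 0 1 * M j c
      else if r = j then A 1 0 * M i c + A 1 1 * M j c
      else M r c := by
  rw [Matrix.mul_apply]
  by_cases hri : r = i
  · rw [if_pos hri]
    have key : ∀ k, EmbM i j A r k * M k c =
        (if k = i then A 0 0 * M i c else 0) + (if k = j then A 0 1 * M j c else 0) := by
      intro k
      by_cases h1 : k = i
      · simp [EmbM, h1, hri, hne, Ne.symm hne]
      · by_cases h2 : k = j
        · simp [EmbM, h1, h2, hri, hne, Ne.symm hne]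
        · simp [EmbM, h1, h2, hri, hne, Ne.symm hne]
    rw [Finset.sum_congr rfl (fun k _ => key k), Finset.sum_add_distrib]
    simp
  · rw [if_neg hri]
    by_cases hrj : r = j
    · rw [if_pos hrj]
      have key : ∀ k, EmbM i j A r k * M k c =
          (if k = i then A 1 0 * M i c else 0) + (if k = j then A 1 1 * M j c else 0) := by
        intro k
        by_cases h1 : k = i
        · simp [EmbM, h1, hrj, hri, hne, Ne.symm hne]
        · by_cases h2 : k = j
          · simp [EmbM, h1, h2, hrj, hri, hne, Ne.symm hne]
          · simp [EmbM, h1, h2, hrj, hri]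
      rw [Finset.sum_congr rfl (fun k _ => key k), Finset.sum_add_distrib]
      simp
    · rw [if_neg hrj]
      have hir : ¬ (i = r) := fun h => hri h.symm
      have hjr : ¬ (j = r) := fun h => hrj h.symm
      have key : ∀ k, EmbM i j A r k * M k c = (if k = r then M r c else 0) := by
        intro k
        by_cases h1 : k = i
        · simp [EmbM, h1, hri, hrj, hir, hjr]
        · by_cases h2 : k = j
          · simp [EmbM, h1, h2, hri, hrj, hir, hjr]
          · by_cases h3 : k = r
            · simp [EmbM, h1, h2, h3, hri, hrj]
            · simp [EmbM, h1, h2, h3]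
              intro _ _ h
              exact absurd h.symm h3
      rw [Finset.sum_congr rfl (fun k _ => key k)]
      simp

theorem embM_one {N : ℕ} {i j : Fin N} (hne : i ≠ j) :
    EmbM i j (1 : Matrix (Fin 2) (Fin 2) F[X]) = 1 := by
  ext r c
  by_cases h1 : r = i <;> by_cases h2 : r = j <;> by_cases h3 : c = i <;> by_cases h4 : c = j <;>
    simp [EmbM, h1, h2, h3, h4, hne, Ne.symm hne, Matrix.one_apply] <;>
    first
    | rfl
    | (rw [if_neg (fun h : i = c => h3 h.symm)]; simp)
    | (rw [if_neg (fun h : j = c => h4 h.symm)]; simp)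

theorem embM_mul_embM {N : ℕ} {i j : Fin N} (hne : i ≠ j)
    (A B : Matrix (Fin 2) (Fin 2) F[X]) :
    EmbM i j A * EmbM i j B = EmbM i j (A * B) := by
  ext r c
  rw [embM_mul hne]
  by_cases h1 : r = i <;> by_cases h2 : r = j <;> by_cases h3 : c = i <;> by_cases h4 : c = j <;>
    simp [EmbM, h1, h2, h3, h4, hne, Ne.symm hne, Matrix.mul_apply, Fin.sum_univ_two]

theorem embM_isUnit_det {N : ℕ} {i j : Fin N} (hne : i ≠ j)
    {A : Matrix (Fin 2) (Fin 2) F[X]} (hA : IsUnit A.det) :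
    IsUnit (EmbM i j A).det := by
  obtain ⟨u, hu⟩ := (Matrix.isUnit_iff_isUnit_det A).mpr hA
  have h1 : A * (↑(u⁻¹) : Matrix (Fin 2) (Fin 2) F[X]) = 1 := by rw [← hu, Units.mul_inv]
  have h2 : (↑(u⁻¹) : Matrix (Fin 2) (Fin 2) F[X]) * A = 1 := by rw [← hu, Units.inv_mul]
  have e1 : EmbM i j A * EmbM i j (↑(u⁻¹) : Matrix (Fin 2) (Fin 2) F[X]) = 1 := by
    rw [embM_mul_embM hne, h1, embM_one hne]
  have e2 : EmbM i j (↑(u⁻¹) : Matrix (Fin 2) (Fin 2) F[X]) * EmbM i j A = 1 := by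
    rw [embM_mul_embM hne, h2, embM_one hne]
  exact (Matrix.isUnit_iff_isUnit_det _).mp ⟨⟨_, _, e1, e2⟩, rfl⟩
theorem assemble {N : ℕ} (P : Matrix (Fin N) (Fin N) F[X])
    (hupper : ∀ r c : Fin N, c < r → P r c = 0)
    (i j : Fin N) (hij : (i : ℕ) + 1 = (j : ℕ))
    (a2 y b2 : F[X])
    (heq : UnimodEquiv !![P i i, P i j; 0, P j j] !![a2, y; 0, b2]) :
    ∃ P' : Matrix (Fin N) (Fin N) F[X],
      UnimodEquiv P P' ∧ (∀ r c : Fin N, c < r → P' r c = 0) ∧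
      (∀ k : Fin N, k ≠ i → k ≠ j → P' k k = P k k) ∧
      P' i i = a2 ∧ P' j j = b2 ∧ Associated P.det P'.det := by
  have hne : i ≠ j := fun h => by rw [h] at hij; omega
  have hiltj : i < j := by rw [Fin.lt_def]; omega
  obtain ⟨U, V, hU, hV, hUV⟩ := heq
  set T : Matrix (Fin 2) (Fin 2) F[X] := !![P i i, P i j; 0, P j j] with hT
  set P' := EmbM i j U * P * EmbM i j V with hP'
  set Q := EmbM i j U * P with hQdef
  have hP'Q : P' = Q * EmbM i j V := rfl
  have hPji : P j i = 0 := hupper j i hiltj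
  have hQ : ∀ r c, Q r c = if r = i then U 0 0 * P i c + U 0 1 * P j c
      else if r = j then U 1 0 * P i c + U 1 1 * P j c else P r c :=
    fun r c => embM_mul hne U P r c
  have hPe : ∀ r c, P' r c = if c = i then Q r i * V 0 0 + Q r j * V 1 0
      else if c = j then Q r i * V 0 1 + Q r j * V 1 1 else Q r c :=
    fun r c => mul_embM hne V Q r c
  have hblock : ∀ r2 c2 : Fin 2, (!![a2, y; 0, b2] : Matrix (Fin 2) (Fin 2) F[X]) r2 c2
      = (U * T * V) r2 c2 := fun r2 c2 => by rw [hUV]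
  have h00 := hblock 0 0
  have h10 := hblock 1 0
  have h11 := hblock 1 1
  simp [Matrix.mul_apply, Fin.sum_univ_two, hT] at h00 h10 h11
  have hQii : Q i i = U 0 0 * P i i := by rw [hQ, if_pos rfl, hPji, mul_zero, add_zero]
  have hQij : Q i j = U 0 0 * P i j + U 0 1 * P j j := by rw [hQ, if_pos rfl]
  have hQji : Q j i = U 1 0 * P i i := by
    rw [hQ, if_neg (Ne.symm hne), if_pos rfl, hPji, mul_zero, add_zero]
  have hQjj : Q j j = U 1 0 * P i j + U 1 1 * P j j := by
    rw [hQ, if_neg (Ne.symm hne), if_pos rfl]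
  refine ⟨P', ⟨EmbM i j U, EmbM i j V, embM_isUnit_det hne hU, embM_isUnit_det hne hV, rfl⟩,
    ?_, ?_, ?_, ?_, ?_⟩
  · -- upper triangular
    intro r c hlt
    rw [hPe]
    by_cases hci : c = i
    · rw [if_pos hci]
      by_cases hrj : r = j
      · rw [hrj, hQji, hQjj]
        linear_combination -h10
      · have hri : r ≠ i := fun h => absurd (hci ▸ h ▸ hlt) (lt_irrefl _)
        have hjr : (j : ℕ) < r := by
          have h1 : (i : ℕ) < r := by rw [hci] at hlt; exact hlt
          have h2 : (r : ℕ) ≠ i := fun h => hri (Fin.ext h)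
          have h3 : (r : ℕ) ≠ j := fun h => hrj (Fin.ext h)
          omega
        have hz1 : P r i = 0 := hupper r i (by rw [Fin.lt_def]; omega)
        have hz2 : P r j = 0 := hupper r j (by rw [Fin.lt_def]; omega)
        rw [hQ, if_neg hri, if_neg hrj, hQ, if_neg hri, if_neg hrj, hz1, hz2]
        ring
    · by_cases hcj : c = j
      · rw [if_neg hci, if_pos hcj]
        have hjr : (j : ℕ) < r := by rw [hcj] at hlt; exact hlt
        have hri : r ≠ i := fun h => by rw [h] at hjr; omega
        have hrj : r ≠ j := fun h => by rw [h] at hjr; omega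
        have hz1 : P r i = 0 := hupper r i (by rw [Fin.lt_def]; omega)
        have hz2 : P r j = 0 := hupper r j (by rw [Fin.lt_def]; omega)
        rw [hQ, if_neg hri, if_neg hrj, hQ, if_neg hri, if_neg hrj, hz1, hz2]
        ring
      · rw [if_neg hci, if_neg hcj, hQ]
        by_cases hri : r = i
        · have hci' : (c : ℕ) < i := by
            rw [hri] at hlt
            exact hlt
          have hz1 : P i c = 0 := hupper i c (by rw [Fin.lt_def]; omega)
          have hz2 : P j c = 0 := hupper j c (by rw [Fin.lt_def]; omega)
          rw [if_pos hri, hz1, hz2]; ring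
        · by_cases hrj : r = j
          · have hci' : (c : ℕ) < i := by
              rw [hrj] at hlt
              have h3 : (c : ℕ) ≠ i := fun h => hci (Fin.ext h)
              have : (c : ℕ) < j := hlt
              omega
            have hz1 : P i c = 0 := hupper i c (by rw [Fin.lt_def]; omega)
            have hz2 : P j c = 0 := hupper j c (by rw [Fin.lt_def]; omega)
            rw [if_neg hri, if_pos hrj, hz1, hz2]; ring
          · rw [if_neg hri, if_neg hrj]
            exact hupper r c hlt
  · -- diagonal preservation
    intro k hki hkj
    rw [hPe, if_neg hki, if_neg hkj, hQ, if_neg hki, if_neg hkj]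
  · -- P' i i
    rw [hPe, if_pos rfl, hQii, hQij]
    linear_combination -h00
  · -- P' j j
    rw [hPe, if_neg (Ne.symm hne), if_pos rfl, hQji, hQjj]
    linear_combination -h11
  · -- determinant associated
    rw [hP', Matrix.det_mul, Matrix.det_mul]
    obtain ⟨u, hu⟩ := embM_isUnit_det hne hU
    obtain ⟨v, hv⟩ := embM_isUnit_det hne hV
    exact ⟨u * v, by rw [Units.val_mul, ← hu, ← hv]; ring⟩

end Two

theorem statement_7 {F : Type*} [Field F] {N : ℕ}
    (P : Matrix (Fin N) (Fin N) F[X])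
    (hreg : P.det ≠ 0)
    (hupper : ∀ i j : Fin N, j < i → P i j = 0)
    (i : Fin N) (hi : (i : ℕ) + 1 < N)
    (aF aG bF bG : F[X])
    (ha : P i i = aF * aG)
    (hb : P ⟨(i : ℕ) + 1, hi⟩ ⟨(i : ℕ) + 1, hi⟩ = bF * bG)
    (hcop : IsCoprime (aF * bF) (aG * bG))
    (m n' : ℕ) (hm : m = OmegaCount aF) (hn' : n' = OmegaCount bF) :
    ∀ α β : ℕ, α + β = m + n' →
      min m n' ≤ α → α ≤ max m n' → min m n' ≤ β → β ≤ max m n' →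
      ∃ (P' : Matrix (Fin N) (Fin N) F[X]) (a' b' : F[X]),
        P'.det ≠ 0 ∧
        (∀ i' j' : Fin N, j' < i' → P' i' j' = 0) ∧
        UnimodEquiv P P' ∧
        (∀ k : Fin N, k ≠ i → k ≠ ⟨(i : ℕ) + 1, hi⟩ → P' k k = P k k) ∧
        P' i i = a' * aG ∧
        P' ⟨(i : ℕ) + 1, hi⟩ ⟨(i : ℕ) + 1, hi⟩ = b' * bG ∧
        (∃ c : F, c ≠ 0 ∧ a' * b' = C c * (aF * bF)) ∧
        OmegaCount a' = α ∧ OmegaCount b' = β := by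
  intro α β hsum hminα hmaxα hminβ hmaxβ
  subst hm hn'
  set j : Fin N := ⟨(i : ℕ) + 1, hi⟩ with hjdef
  have hij : (i : ℕ) + 1 = (j : ℕ) := rfl
  have hBT : P.BlockTriangular id := fun r c h => hupper r c h
  have hdet : P.det = ∏ k, P k k := Matrix.det_of_upperTriangular hBT
  have hdiag : ∀ k, P k k ≠ 0 := by
    intro k hk
    exact hreg (by rw [hdet]; exact Finset.prod_eq_zero (Finset.mem_univ k) hk)
  have hA := hdiag i
  have hB := hdiag j
  rw [ha] at hA
  rw [hb] at hB
  have haF : aF ≠ 0 := fun h => hA (by rw [h, zero_mul])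
  have haG : aG ≠ 0 := fun h => hA (by rw [h, mul_zero])
  have hbF : bF ≠ 0 := fun h => hB (by rw [h, zero_mul])
  have hbG : bG ≠ 0 := fun h => hB (by rw [h, mul_zero])
  obtain ⟨a', b', y, ha'0, hb'0, hΩa, hΩb, hab, hequiv⟩ :=
    two_main aF aG bF bG (P i j) haF haG hbF hbG hcop α β hsum hminα hminβ
  have hequiv' : UnimodEquiv !![P i i, P i j; 0, P j j] !![a' * aG, y; 0, b' * bG] := by
    rw [ha, hb]
    exact hequiv
  obtain ⟨P', hPP', htri, hdiagpres, hii, hjj, hdetassoc⟩ :=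
    assemble P hupper i j hij (a' * aG) y (b' * bG) hequiv'
  refine ⟨P', a', b', ?_, htri, hPP', hdiagpres, hii, hjj, ⟨1, one_ne_zero, hab⟩, hΩa, hΩb⟩
  intro h
  exact hreg (hdetassoc.symm.eq_zero_iff.mp h)
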